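/- In the hitting-set-to-k-means reduction, the constructed clustering from a hitting set S of size k has k-means cost at most B = m(r−1) + s(n−k): taking centers c_j = e_{i_j} for j ≤ k and c_{k+1} = 0, each characteristic vector w (with exactly r ones and a 1 at coordinate i_j) contributes ||w − e_{i_j}||² = r − 1, each basis vector e_h in the last cluster contributes 1, and all other points contribute 0. -/

import Mathlib

lemma sum_single_apply {n : ℕ} (T : Finset (Fin n)) (p : Fin n) :
    (∑ c ∈ T, EuclideanSpace.single c (1:ℝ)) p = if p ∈ T then 1 else 0 := by
  classical
  induction T using Finset.induction with
  | empty => simp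
  | insert a s h ih =>
    rw [Finset.sum_insert h]
    have : (∑ c ∈ _, EuclideanSpace.single c (1:ℝ)) p = _ := ih
    simp only [PiLp.add_apply, this, EuclideanSpace.single_apply, Finset.mem_insert]
    aesop

lemma norm_sq_sum_single {n : ℕ} (T : Finset (Fin n)) :
    ‖∑ c ∈ T, EuclideanSpace.single c (1:ℝ)‖^2 = T.card := by
  rw [EuclideanSpace.norm_eq, Real.sq_sqrt (by positivity)]
  simp only [sum_single_apply, Real.norm_eq_abs]
  simp [apply_ite, Finset.sum_ite_mem]


/-- The k-means cost of a cluster given as a multiset of points: the infimum over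
centers `c` of the sum of squared Euclidean distances to `c`. -/
noncomputable def kmeansCost {n : ℕ} (M : Multiset (EuclideanSpace ℝ (Fin n))) : ℝ :=
  ⨅ c : EuclideanSpace ℝ (Fin n), ((M.map fun x => ‖x - c‖ ^ 2).sum)

lemma kmeansCost_le {n : ℕ} (M : Multiset (EuclideanSpace ℝ (Fin n)))
    (c : EuclideanSpace ℝ (Fin n)) :
    kmeansCost M ≤ ((M.map fun x => ‖x - c‖ ^ 2).sum) := by
  apply ciInf_le
  refine ⟨0, ?_⟩
  rintro x ⟨c', rfl⟩
  apply Multiset.sum_nonneg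
  intro y hy
  obtain ⟨z, _, rfl⟩ := Multiset.mem_map.mp hy
  positivity


/-- in the hitting-set-to-k-means reduction, the clustering built from a
hitting set `{u_{idx 1}, …, u_{idx k}}` has k-means cost at most
`B = m(r−1) + s(n−k)`: cluster `C_h` consists of `s` copies of `e_{idx h}` together
with the characteristic vectors `w_j` assigned to it (`f j = h`, with
`idx (f j) ∈ A j`), and the last cluster consists of `t` zero vectors and `s` copies
of `e_c` for each unused coordinate `c`. -/
theorem hittingSet_clustering_cost {n m s t k r : ℕ}
    (A : Fin m → Finset (Fin n)) (hr : ∀ j, (A j).card = r)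
    (idx : Fin k → Fin n) (hinj : Function.Injective idx)
    (f : Fin m → Fin k) (hf : ∀ j, idx (f j) ∈ A j) :
    (∑ h : Fin k, kmeansCost
        (Multiset.replicate s (EuclideanSpace.single (idx h) (1 : ℝ)) +
          ((Finset.univ.filter fun j => f j = h).val.map
            fun j => ∑ c ∈ A j, EuclideanSpace.single c (1 : ℝ)))) +
      kmeansCost
        (Multiset.replicate t (0 : EuclideanSpace ℝ (Fin n)) +
          ((Finset.univ.filter fun c : Fin n => ∀ h, idx h ≠ c).val.bind
            fun c => Multiset.replicate s (EuclideanSpace.single c (1 : ℝ))))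
      ≤ ((m * (r - 1) + s * (n - k) : ℕ) : ℝ) := by
  classical
  -- cost of cluster h
  have hclu : ∀ h : Fin k, kmeansCost
      (Multiset.replicate s (EuclideanSpace.single (idx h) (1 : ℝ)) +
        ((Finset.univ.filter fun j => f j = h).val.map
          fun j => ∑ c ∈ A j, EuclideanSpace.single c (1 : ℝ)))
      ≤ ((Finset.univ.filter fun j => f j = h).card * (r - 1) : ℕ) := by
    intro h
    refine le_trans (kmeansCost_le _ (EuclideanSpace.single (idx h) (1 : ℝ))) ?_
    rw [Multiset.map_add, Multiset.sum_add, Multiset.map_replicate, Multiset.map_map]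
    have h0 : ‖EuclideanSpace.single (idx h) (1:ℝ) - EuclideanSpace.single (idx h) (1:ℝ)‖^2 = 0 := by
      simp
    rw [h0, Multiset.sum_replicate, smul_zero, zero_add]
    have hw : ∀ j ∈ Finset.univ.filter fun j => f j = h,
        ((fun x => ‖x - EuclideanSpace.single (idx h) (1:ℝ)‖^2) ∘
          fun j => ∑ c ∈ A j, EuclideanSpace.single c (1:ℝ)) j = ((r - 1 : ℕ) : ℝ) := by
      intro j hj
      simp only [Finset.mem_filter] at hj
      have hmem : idx h ∈ A j := hj.2 ▸ hf j
      have : (∑ c ∈ A j, EuclideanSpace.single c (1:ℝ)) - EuclideanSpace.single (idx h) (1:ℝ)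
          = ∑ c ∈ (A j).erase (idx h), EuclideanSpace.single c (1:ℝ) := by
        rw [← Finset.add_sum_erase _ _ hmem]
        abel
      simp only [Function.comp_apply, this, norm_sq_sum_single, Finset.card_erase_of_mem hmem,
        hr j]
    rw [Multiset.map_congr rfl hw, Multiset.map_const', Multiset.sum_replicate, nsmul_eq_mul]
    push_cast
    exact le_refl _
  -- cost of the last cluster
  have hlast : kmeansCost
      (Multiset.replicate t (0 : EuclideanSpace ℝ (Fin n)) +
        ((Finset.univ.filter fun c : Fin n => ∀ h, idx h ≠ c).val.bind
          fun c => Multiset.replicate s (EuclideanSpace.single c (1 : ℝ))))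
      ≤ ((s * (n - k) : ℕ) : ℝ) := by
    refine le_trans (kmeansCost_le _ 0) ?_
    rw [Multiset.map_add, Multiset.sum_add, Multiset.map_replicate]
    have h0 : ‖(0 : EuclideanSpace ℝ (Fin n)) - 0‖^2 = 0 := by simp
    rw [h0, Multiset.sum_replicate, smul_zero, zero_add, Multiset.map_bind]
    rw [Multiset.sum_bind]
    have hone : ∀ c : Fin n,
        ((Multiset.replicate s (EuclideanSpace.single c (1:ℝ))).map
          fun x => ‖x - 0‖^2).sum = (s : ℝ) := by
      intro c
      rw [Multiset.map_replicate, Multiset.sum_replicate]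
      have : ‖EuclideanSpace.single c (1:ℝ) - 0‖^2 = 1 := by
        have := norm_sq_sum_single ({c} : Finset (Fin n))
        simpa using this
      rw [this]
      simp
    rw [Multiset.map_congr rfl fun c _ => hone c]
    rw [Multiset.map_const', Multiset.sum_replicate, nsmul_eq_mul]
    have hcard : (Finset.univ.filter fun c : Fin n => ∀ h, idx h ≠ c).card = n - k := by
      have : (Finset.univ.filter fun c : Fin n => ∀ h, idx h ≠ c)
          = (Finset.univ.image idx)ᶜ := by
        ext c
        simp [eq_comm]
      rw [this, Finset.card_compl, Finset.card_image_of_injective _ hinj]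
      simp
    rw [← Finset.card_def, hcard]
    push_cast
    ring_nf
    exact le_refl _
  -- combine
  have hsum : ∑ h : Fin k, (((Finset.univ.filter fun j => f j = h).card * (r - 1) : ℕ) : ℝ)
      = ((m * (r - 1) : ℕ) : ℝ) := by
    push_cast
    rw [← Finset.sum_mul]
    congr 1
    rw [← Nat.cast_sum]
    congr 1
    have := Finset.card_eq_sum_card_fiberwise (f := f) (s := Finset.univ) (t := Finset.univ)
      (fun j _ => Finset.mem_univ _)
    simpa using this.symm
  calc _ ≤ (∑ h : Fin k, (((Finset.univ.filter fun j => f j = h).card * (r - 1) : ℕ) : ℝ))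
        + ((s * (n - k) : ℕ) : ℝ) := by
        exact add_le_add (Finset.sum_le_sum fun h _ => hclu h) hlast
      _ = ((m * (r - 1) + s * (n - k) : ℕ) : ℝ) := by
        rw [hsum]; push_cast; ring
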